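/- Let q ∈ (0,1) and let n* be a positive integer such that n*·q^{n*} ≥ n·q^n for every positive integer n. Then for every integer N ≥ 1 and every finite list (n_1,…,n_I) of positive integers with n_1 + … + n_I = N, one has q^{−n_1} + … + q^{−n_I} ≥ N/(n*·q^{n*}). -/

import Mathlib

/-- The cost of a list of group sizes: `q^{-n_1} + ⋯ + q^{-n_I}`. -/
noncomputable def cost (q : ℝ) (l : List ℕ) : ℝ := (l.map fun n => q ^ (-(n : ℝ))).sum

/-- For `q ∈ (0,1)` and `n*` a positive-integer maximizer of `n * q^n`: every
composition of `N ≥ 1` into positive parts has cost at least `N / (n* * q^{n*})`. -/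
theorem stmt_11 (q : ℝ) (hq : q ∈ Set.Ioo (0 : ℝ) 1)
    (ns : ℕ) (hns : 0 < ns)
    (hmax : ∀ n : ℕ, 0 < n → (n : ℝ) * q ^ (n : ℝ) ≤ (ns : ℝ) * q ^ (ns : ℝ))
    (N : ℕ) (hN : 1 ≤ N)
    (l : List ℕ) (hpos : ∀ n ∈ l, 0 < n) (hsum : l.sum = N) :
    (N : ℝ) / ((ns : ℝ) * q ^ (ns : ℝ)) ≤ cost q l := by
  obtain ⟨hq0, hq1⟩ := hq
  set M : ℝ := (ns : ℝ) * q ^ (ns : ℝ) with hM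
  have hMpos : 0 < M := by
    apply mul_pos (by exact_mod_cast hns) (Real.rpow_pos_of_pos hq0 _)
  subst hsum
  clear hN
  induction l with
  | nil => simp [cost]
  | cons a t ih =>
      have ha : 0 < a := hpos a List.mem_cons_self
      have hkey : (a : ℝ) / M ≤ q ^ (-(a : ℝ)) := by
        rw [div_le_iff₀ hMpos]
        have := hmax a ha
        calc (a : ℝ) = (a : ℝ) * q ^ (a : ℝ) * q ^ (-(a : ℝ)) := by
              rw [mul_assoc, ← Real.rpow_add hq0]
              simp
          _ ≤ M * q ^ (-(a : ℝ)) := by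
              apply mul_le_mul_of_nonneg_right this
                (le_of_lt (Real.rpow_pos_of_pos hq0 _))
          _ = q ^ (-(a : ℝ)) * M := mul_comm _ _
      have ht := ih (fun n hn => hpos n (List.mem_cons_of_mem a hn))
      have : ((a + t.sum : ℕ) : ℝ) / M = (a : ℝ) / M + ((t.sum : ℕ) : ℝ) / M := by
        push_cast; ring
      rw [List.sum_cons, this]
      simpa [cost] using add_le_add hkey ht
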